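/- Any nonzero element of the subalgebra t ⊕ sp(m) ⊂ so(4m), m ≥ 2, where t ⊂ sp(1) is at most one-dimensional acting by scalar right multiplication and sp(m) acts on ℍ^m, has real rank at least 4 as a real endomorphism of ℝ^{4m}. -/

import Mathlib

open scoped Quaternion Matrix
noncomputable section

/-- The real-linear endomorphism of `ℍ^m ≅ ℝ^{4m}` given by an element `(q, A)` of
`t ⊕ sp(m)`:  `A` (a quaternionic matrix) acts by left matrix multiplication and
`q ∈ Im ℍ ⊇ t` acts by right scalar multiplication. -/
def Tmap (m : ℕ) (A : Matrix (Fin m) (Fin m) ℍ[ℝ]) (q : ℍ[ℝ]) :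
    (Fin m → ℍ[ℝ]) →ₗ[ℝ] (Fin m → ℍ[ℝ]) where
  toFun x := A.mulVec x + fun l => x l * q
  map_add' x y := by
    funext l
    simp only [Matrix.mulVec, dotProduct, Pi.add_apply, mul_add,
      Finset.sum_add_distrib, add_mul]
    abel
  map_smul' c x := by
    funext l
    simp only [Matrix.mulVec_smul, Pi.smul_apply, Pi.add_apply, RingHom.id_apply,
      smul_mul_assoc, smul_add]

namespace Stmt3Aux

lemma Tmap_apply {m : ℕ} (A : Matrix (Fin m) (Fin m) ℍ[ℝ]) (q : ℍ[ℝ]) (x : Fin m → ℍ[ℝ])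
    (l : Fin m) : Tmap m A q x l = A.mulVec x l + x l * q := rfl

def rmul (m : ℕ) (c : ℍ[ℝ]) : (Fin m → ℍ[ℝ]) →ₗ[ℝ] (Fin m → ℍ[ℝ]) where
  toFun x := fun l => x l * c
  map_add' x y := by funext l; simp [add_mul]
  map_smul' r x := by funext l; simp [smul_mul_assoc]

lemma rmul_apply {m : ℕ} (c : ℍ[ℝ]) (x : Fin m → ℍ[ℝ]) (l : Fin m) :
    rmul m c x l = x l * c := rfl

def La (m : ℕ) (A : Matrix (Fin m) (Fin m) ℍ[ℝ]) :
    (Fin m → ℍ[ℝ]) →ₗ[ℝ] (Fin m → ℍ[ℝ]) where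
  toFun x := A.mulVec x
  map_add' x y := by
    funext l
    simp only [Matrix.mulVec, dotProduct, Pi.add_apply, mul_add,
      Finset.sum_add_distrib]
  map_smul' c x := by
    funext l
    simp only [Matrix.mulVec_smul, Pi.smul_apply, RingHom.id_apply]

lemma mulVec_rmul {m : ℕ} (A : Matrix (Fin m) (Fin m) ℍ[ℝ]) (x : Fin m → ℍ[ℝ]) (c : ℍ[ℝ]) :
    A.mulVec (rmul m c x) = rmul m c (A.mulVec x) := by
  funext l
  simp only [Matrix.mulVec, dotProduct, rmul_apply]
  rw [Finset.sum_mul]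
  simp [rmul_apply, mul_assoc]

lemma rmul_inj {m : ℕ} (c : ℍ[ℝ]) (hc : c ≠ 0) : Function.Injective (rmul m c) := by
  intro x y h
  funext l
  have h2 := congrFun h l
  simp only [rmul_apply] at h2
  exact mul_right_cancel₀ hc h2


/-- A nonzero real-linear endomorphism of `ℍ^m` commuting with all right scalar
multiplications has rank at least 4. -/
lemma four_le_rank {m : ℕ} (f : (Fin m → ℍ[ℝ]) →ₗ[ℝ] (Fin m → ℍ[ℝ]))
    (hf : ∀ (c : ℍ[ℝ]) (x : Fin m → ℍ[ℝ]), f (rmul m c x) = rmul m c (f x))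
    (hne : f ≠ 0) : 4 ≤ Module.finrank ℝ (LinearMap.range f) := by
  obtain ⟨x, hx⟩ : ∃ x, f x ≠ 0 := by
    by_contra h
    push_neg at h
    exact hne (LinearMap.ext fun x => h x)
  set y := f x with hy
  obtain ⟨l, hl⟩ : ∃ l, y l ≠ 0 := Function.ne_iff.mp hx
  set u : Fin 4 → ℍ[ℝ] := ![⟨1,0,0,0⟩, ⟨0,1,0,0⟩, ⟨0,0,1,0⟩, ⟨0,0,0,1⟩] with hu
  set v : Fin 4 → (Fin m → ℍ[ℝ]) := fun i => rmul m (u i) y with hv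
  have hindep : LinearIndependent ℝ v := by
    rw [Fintype.linearIndependent_iff]
    intro g hg
    have h2 := congrFun hg l
    simp only [Finset.sum_apply, Pi.smul_apply, Pi.zero_apply, hv, rmul_apply] at h2
    have h3 : y l * (∑ i, g i • u i) = 0 := by
      rw [Finset.mul_sum]
      simp only [mul_smul_comm]
      exact h2
    have h4 : (∑ i, g i • u i) = 0 := by
      rcases mul_eq_zero.mp h3 with h | h
      · exact absurd h hl
      · exact h
    have h5 : (⟨g 0, g 1, g 2, g 3⟩ : ℍ[ℝ]) = 0 := by
      refine Eq.trans ?_ h4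
      simp [hu, Fin.sum_univ_four]
      ext
      · erw [Quaternion.re_add, Quaternion.re_add, Quaternion.re_add, Quaternion.re_smul, Quaternion.re_smul, Quaternion.re_smul, Quaternion.re_smul]; simp
      · erw [Quaternion.imI_add, Quaternion.imI_add, Quaternion.imI_add, Quaternion.imI_smul, Quaternion.imI_smul, Quaternion.imI_smul, Quaternion.imI_smul]; simp
      · erw [Quaternion.imJ_add, Quaternion.imJ_add, Quaternion.imJ_add, Quaternion.imJ_smul, Quaternion.imJ_smul, Quaternion.imJ_smul, Quaternion.imJ_smul]; simp
      · erw [Quaternion.imK_add, Quaternion.imK_add, Quaternion.imK_add, Quaternion.imK_smul, Quaternion.imK_smul, Quaternion.imK_smul, Quaternion.imK_smul]; simp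
    intro i
    fin_cases i
    · have := congrArg QuaternionAlgebra.re h5; simpa using this
    · have := congrArg QuaternionAlgebra.imI h5; simpa using this
    · have := congrArg QuaternionAlgebra.imJ h5; simpa using this
    · have := congrArg QuaternionAlgebra.imK h5; simpa using this
  have hmem : ∀ i, v i ∈ LinearMap.range f := fun i => ⟨rmul m (u i) x, hf (u i) x⟩
  have hle : Submodule.span ℝ (Set.range v) ≤ LinearMap.range f := by
    rw [Submodule.span_le]
    rintro _ ⟨i, rfl⟩
    exact hmem i
  calc (4 : ℕ) = Module.finrank ℝ (Submodule.span ℝ (Set.range v)) := by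
        rw [finrank_span_eq_card hindep]; simp
    _ ≤ Module.finrank ℝ (LinearMap.range f) := Submodule.finrank_mono hle

lemma finrank_V (m : ℕ) : Module.finrank ℝ (Fin m → ℍ[ℝ]) = 4 * m := by
  rw [Module.finrank_pi_fintype]
  simp [Quaternion.finrank_eq_four, mul_comm]

end Stmt3Aux

set_option maxHeartbeats 2000000 in
open Stmt3Aux in
/-- For `m ≥ 2`, any nonzero element of `t ⊕ sp(m) ⊂ so(4m)`, where
`sp(m)` consists of quaternionic skew-Hermitian matrices acting on `ℍ^m` and
`t ⊂ Im ℍ` (at most one-dimensional) acts by right scalar multiplication, has real rank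
at least `4` as a real endomorphism of `ℝ^{4m} ≅ ℍ^m`. -/
theorem stmt3 (m : ℕ) (hm : 2 ≤ m) (A : Matrix (Fin m) (Fin m) ℍ[ℝ]) (q : ℍ[ℝ])
    (hA : Aᴴ = -A) (hq : q.re = 0) (hne : Tmap m A q ≠ 0) :
    4 ≤ Module.finrank ℝ (LinearMap.range (Tmap m A q)) := by
  classical
  by_cases hq0 : q = 0
  · subst hq0
    refine four_le_rank _ ?_ hne
    intro c x
    funext l
    simp only [Tmap_apply, rmul_apply, mul_zero, add_zero]
    have h := congrFun (mulVec_rmul A x c) l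
    simpa [rmul_apply] using h
  · by_contra hlt
    push_neg at hlt
    set T := Tmap m A q with hT
    set ν : ℝ := q.imI^2 + q.imJ^2 + q.imK^2 with hν
    have hν0 : ν ≠ 0 := by
      intro h
      apply hq0
      ext <;> simp [hq] <;> nlinarith [sq_nonneg q.imI, sq_nonneg q.imJ, sq_nonneg q.imK]
    have hqq : ∀ a : ℍ[ℝ], a * (q * q) = (-ν) • a := by
      intro a
      ext <;> simp [hq, hν] <;> ring
    have hrn := LinearMap.finrank_range_add_finrank_ker T
    -- for every x in ker T, A·x = -x·q
    have hker : ∀ x ∈ LinearMap.ker T, A.mulVec x = -(rmul m q x) := by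
      intro x hx
      funext l
      have h := congrFun (LinearMap.mem_ker.mp hx) l
      simp only [hT, Tmap_apply, Pi.zero_apply] at h
      simp only [Pi.neg_apply, rmul_apply]
      exact eq_neg_of_add_eq_zero_left h
    -- Step 1: P := A² + ν vanishes
    set P : (Fin m → ℍ[ℝ]) →ₗ[ℝ] (Fin m → ℍ[ℝ]) :=
      (La m A) ∘ₗ (La m A) + ν • LinearMap.id with hP
    have hPapply : ∀ x, P x = A.mulVec (A.mulVec x) + ν • x := fun x => rfl
    have hPcomm : ∀ (c : ℍ[ℝ]) (x : Fin m → ℍ[ℝ]), P (rmul m c x) = rmul m c (P x) := by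
      intro c x
      funext l
      rw [hPapply, hPapply]
      simp only [Pi.add_apply, Pi.smul_apply, rmul_apply, mulVec_rmul]
      simp [rmul_apply, smul_mul_assoc, add_mul]
    have hkerTP : LinearMap.ker T ≤ LinearMap.ker P := by
      intro x hx
      rw [LinearMap.mem_ker]
      funext l
      rw [hPapply]
      simp only [Pi.add_apply, Pi.smul_apply, Pi.zero_apply]
      rw [hker x hx, Matrix.mulVec_neg, mulVec_rmul, hker x hx, map_neg, neg_neg]
      simp only [rmul_apply]
      rw [mul_assoc, hqq (x l)]
      simp
    have hP0 : P = 0 := by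
      by_contra hP0
      have h4 := four_le_rank P hPcomm hP0
      have hrnP := LinearMap.finrank_range_add_finrank_ker P
      have hkle := Submodule.finrank_mono hkerTP
      omega
    have hA2 : ∀ x : Fin m → ℍ[ℝ], A.mulVec (A.mulVec x) = -(ν • x) := by
      intro x
      have h := congrFun (congrArg DFunLike.coe hP0) x
      rw [hPapply] at h
      simp only [LinearMap.zero_apply] at h
      exact eq_neg_of_add_eq_zero_left h
    have hAinj : ∀ x : Fin m → ℍ[ℝ], A.mulVec x = 0 → x = 0 := by
      intro x h
      have h2 := hA2 x
      rw [h, Matrix.mulVec_zero] at h2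
      have h3 : ν • x = 0 := by
        rw [← neg_neg (ν • x), ← h2, neg_zero]
      rcases smul_eq_zero.mp h3 with h4 | h4
      · exact absurd h4 hν0
      · exact h4
    -- anticommuting unit
    obtain ⟨c, hc0, hcq⟩ : ∃ c : ℍ[ℝ], c ≠ 0 ∧ c * q = -(q * c) := by
      by_cases h1 : q.imI = 0 ∧ q.imJ = 0
      · refine ⟨⟨0,1,0,0⟩, ?_, ?_⟩
        · intro h
          have := congrArg QuaternionAlgebra.imI h
          simp at this
        · ext
          · erw [Quaternion.re_mul, Quaternion.re_neg, Quaternion.re_mul]; simp [hq, h1.1, h1.2]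
          · erw [Quaternion.imI_mul, Quaternion.imI_neg, Quaternion.imI_mul]; simp [hq, h1.1, h1.2]
          · erw [Quaternion.imJ_mul, Quaternion.imJ_neg, Quaternion.imJ_mul]; simp [hq, h1.1, h1.2]
          · erw [Quaternion.imK_mul, Quaternion.imK_neg, Quaternion.imK_mul]; simp [hq, h1.1, h1.2]
      · refine ⟨⟨0,q.imJ,-q.imI,0⟩, ?_, ?_⟩
        · intro h
          apply h1
          constructor
          · have := congrArg QuaternionAlgebra.imJ h
            simpa using this
          · have := congrArg QuaternionAlgebra.imI h
            simpa using this
        · ext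
          · erw [Quaternion.re_mul, Quaternion.re_neg, Quaternion.re_mul]; simp [hq]
          · erw [Quaternion.imI_mul, Quaternion.imI_neg, Quaternion.imI_mul]; simp [hq]; ring
          · erw [Quaternion.imJ_mul, Quaternion.imJ_neg, Quaternion.imJ_mul]; simp [hq]; ring
          · erw [Quaternion.imK_mul, Quaternion.imK_neg, Quaternion.imK_mul]; simp [hq]
    have hc2 : c * -q = q * c := by rw [mul_neg, hcq, neg_neg]
    -- the map x ↦ x·c sends ker T into ker S, S := Tmap m A (-q)
    set S := Tmap m A (-q) with hS
    have hrnS := LinearMap.finrank_range_add_finrank_ker S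
    have hmaps : ∀ x ∈ LinearMap.ker T, rmul m c x ∈ LinearMap.ker S := by
      intro x hx
      rw [LinearMap.mem_ker]
      funext l
      simp only [hS, Tmap_apply, Pi.zero_apply, mulVec_rmul, rmul_apply]
      rw [congrFun (hker x hx) l]
      simp only [Pi.neg_apply, rmul_apply]
      rw [mul_assoc, hc2, neg_mul, mul_assoc]
      exact neg_add_cancel _
    have hkerle : Module.finrank ℝ (LinearMap.ker T) ≤ Module.finrank ℝ (LinearMap.ker S) := by
      have hmaple : Submodule.map (rmul m c) (LinearMap.ker T) ≤ LinearMap.ker S := by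
        rintro _ ⟨x, hx, rfl⟩
        exact hmaps x hx
      have heq := LinearEquiv.finrank_eq
        ((LinearMap.ker T).equivMapOfInjective (rmul m c) (rmul_inj c hc0) )
      rw [heq]
      exact Submodule.finrank_mono hmaple
    -- T + S = 2·A is injective
    have hTSinj : Function.Injective (T + S) := by
      rw [← LinearMap.ker_eq_bot]
      rw [LinearMap.ker_eq_bot']
      intro x hx
      apply hAinj
      funext l
      have h := congrFun hx l
      simp only [LinearMap.add_apply, Pi.add_apply, hT, hS, Tmap_apply, Pi.zero_apply,
        mul_neg] at h
      have h2 : A.mulVec x l + A.mulVec x l =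
          A.mulVec x l + x l * q + (A.mulVec x l + -(x l * q)) := by abel
      rw [h] at h2
      have h3 : (2:ℝ) • (A.mulVec x l) = 0 := by rw [two_smul]; exact h2
      rcases smul_eq_zero.mp h3 with h4 | h4
      · exact absurd h4 two_ne_zero
      · exact h4
    have hrTS : Module.finrank ℝ (LinearMap.range (T + S)) = 4 * m := by
      rw [LinearMap.finrank_range_of_inj hTSinj, finrank_V]
    have hsub : LinearMap.range (T + S) ≤ LinearMap.range T ⊔ LinearMap.range S := by
      rintro _ ⟨x, rfl⟩
      rw [LinearMap.add_apply]
      exact Submodule.add_mem_sup ⟨x, rfl⟩ ⟨x, rfl⟩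
    have hfin : (4 : ℕ) * m ≤ Module.finrank ℝ (LinearMap.range T)
        + Module.finrank ℝ (LinearMap.range S) := by
      calc (4:ℕ) * m = Module.finrank ℝ (LinearMap.range (T + S)) := hrTS.symm
        _ ≤ Module.finrank ℝ ((LinearMap.range T ⊔ LinearMap.range S : Submodule ℝ _)) :=
            Submodule.finrank_mono hsub
        _ ≤ _ := Submodule.finrank_add_le_finrank_add_finrank _ _
    have hV := finrank_V m
    omega

end
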